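/- Let G^Q(ρ) = ∫ j̃(α,η) ν^{Q,ρ}(dα,dη) where j̃(α,η) = α(0) Σ_z z p(z) b(η(0),η(z)), and suppose for ρ ≤ ρ′ there is a shift-invariant coupling ν̄^{ρ,ρ′} of ν^{Q,ρ} and ν^{Q,ρ′} supported on ordered pairs with ∫|η(x) − ξ(x)| dν̄^{ρ,ρ′} = ρ′ − ρ for all x. Then |G^Q(ρ) − G^Q(ρ′)| ≤ V |ρ − ρ′| with V = 2 c^{−1} ‖b‖_∞ Σ_{z∈ℤ} |z| p(z), provided Σ_z |z| p(z) < ∞, α(0) ≤ c^{−1}, and b is bounded. -/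

import Mathlib

open MeasureTheory

/-- The microscopic flux `j̃(α,η) = α(0) Σ_z z p(z) b(η(0),η(z))`. -/
noncomputable def microFlux (p : ℤ → ℝ) (b : ℕ → ℕ → ℝ)
    (α : ℤ → ℝ) (η : ℤ → ℕ) : ℝ :=
  α 0 * ∑' z : ℤ, (z : ℝ) * p z * b (η 0) (η z)

private lemma measurable_tsum_int {α : Type*} [MeasurableSpace α] {f : ℤ → α → ℝ}
    (hf : ∀ z, Measurable (f z)) (hs : ∀ x, Summable fun z => f z x) :
    Measurable fun x => ∑' z, f z x := by
  classical
  let e : ℕ ≃ ℤ := (Denumerable.eqv ℤ).symm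
  refine measurable_of_tendsto_metrizable
    (f := fun n x => ∑ i ∈ Finset.range n, f (e i) x)
    (fun n => Finset.measurable_sum _ fun i _ => hf _) ?_
  rw [tendsto_pi_nhds]
  intro x
  have h1 : Summable fun n : ℕ => f (e n) x :=
    (e.summable_iff (f := fun z => f z x)).2 (hs x)
  have h2 := h1.hasSum.tendsto_sum_nat
  have h3 : ∑' n : ℕ, f (e n) x = ∑' z, f z x := e.tsum_eq (fun z => f z x)
  rwa [h3] at h2

private lemma abs_tsum_le' {f g : ℤ → ℝ} (hg : Summable g) (h : ∀ z, |f z| ≤ g z) :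
    |∑' z, f z| ≤ ∑' z, g z := by
  have hf : Summable fun z => |f z| :=
    Summable.of_nonneg_of_le (fun z => abs_nonneg _) h hg
  calc |∑' z, f z| ≤ ∑' z, |f z| := by
        simpa [Real.norm_eq_abs] using
          norm_tsum_le_tsum_norm (f := f) (by simpa [Real.norm_eq_abs] using hf)
    _ ≤ ∑' z, g z := Summable.tsum_le_tsum h hf hg

private lemma b_lip {B : ℝ} {b : ℕ → ℕ → ℝ} (hb0 : ∀ n m, 0 ≤ b n m)
    (hbB : ∀ n m, b n m ≤ B) {n m n' m' : ℕ} (hn : n ≤ n') (hm : m ≤ m') :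
    |b n m - b n' m'| ≤ B * (((n' : ℝ) - n) + ((m' : ℝ) - m)) := by
  have hB : 0 ≤ B := le_trans (hb0 0 0) (hbB 0 0)
  by_cases h1 : n = n'
  · by_cases h2 : m = m'
    · subst h1; subst h2
      simp only [sub_self, abs_zero, add_zero]
      positivity
    · have habs : |b n m - b n' m'| ≤ B :=
        abs_sub_le_iff.2 ⟨by linarith [hb0 n' m', hbB n m], by linarith [hb0 n m, hbB n' m']⟩
      have hm1 : (1 : ℝ) ≤ (m' : ℝ) - m := by
        have : m + 1 ≤ m' := Nat.succ_le_of_lt (lt_of_le_of_ne hm h2)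
        have := (Nat.cast_le (α := ℝ)).2 this
        push_cast at this; linarith
      have hn0 : (0 : ℝ) ≤ (n' : ℝ) - n := by
        have := (Nat.cast_le (α := ℝ)).2 hn; linarith
      nlinarith
  · have habs : |b n m - b n' m'| ≤ B :=
      abs_sub_le_iff.2 ⟨by linarith [hb0 n' m', hbB n m], by linarith [hb0 n m, hbB n' m']⟩
    have hn1 : (1 : ℝ) ≤ (n' : ℝ) - n := by
      have : n + 1 ≤ n' := Nat.succ_le_of_lt (lt_of_le_of_ne hn h1)
      have := (Nat.cast_le (α := ℝ)).2 this
      push_cast at this; linarith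
    have hm0 : (0 : ℝ) ≤ (m' : ℝ) - m := by
      have := (Nat.cast_le (α := ℝ)).2 hm; linarith
    nlinarith

/-- truncated site discrepancy -/
private noncomputable def ddf (K : ℕ) (x : ℤ)
    (q : (ℤ → ℝ) × (ℤ → ℕ) × (ℤ → ℕ)) : ℝ :=
  min |(q.2.1 x : ℝ) - (q.2.2 x : ℝ)| (K : ℝ)

theorem flux_lipschitz
    (K : ℕ) (c B : ℝ) (hc : 0 < c) (hB : 0 ≤ B)
    (p : ℤ → ℝ) (hp : ∀ z, 0 ≤ p z)
    (hpsum : Summable fun z : ℤ => |(z : ℝ)| * p z)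
    (b : ℕ → ℕ → ℝ) (hbnonneg : ∀ n m, 0 ≤ b n m) (hbB : ∀ n m, b n m ≤ B)
    (ν ν' : Measure ((ℤ → ℝ) × (ℤ → ℕ)))
    [IsProbabilityMeasure ν] [IsProbabilityMeasure ν']
    (νc : Measure ((ℤ → ℝ) × (ℤ → ℕ) × (ℤ → ℕ))) [IsProbabilityMeasure νc]
    (hmarg1 : νc.map (fun q => (q.1, q.2.1)) = ν)
    (hmarg2 : νc.map (fun q => (q.1, q.2.2)) = ν')
    (hαbound : ∀ᵐ q ∂νc, ∀ x : ℤ, c ≤ q.1 x ∧ q.1 x ≤ c⁻¹)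
    (hord : ∀ᵐ q ∂νc, ∀ y : ℤ, q.2.1 y ≤ q.2.2 y)
    (hbound : ∀ᵐ q ∂νc, ∀ y : ℤ, q.2.2 y ≤ K)
    (ρ ρ' : ℝ) (hρ : ρ ≤ ρ')
    (hcoupl : ∀ x : ℤ, ∫ q, |(q.2.1 x : ℝ) - (q.2.2 x : ℝ)| ∂νc = ρ' - ρ) :
    |(∫ q, microFlux p b q.1 q.2 ∂ν) - ∫ q, microFlux p b q.1 q.2 ∂ν'| ≤
      (2 * c⁻¹ * B * ∑' z : ℤ, |(z : ℝ)| * p z) * |ρ - ρ'| := by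
  classical
  set S := ∑' z : ℤ, |(z : ℝ)| * p z with hSdef
  have hS0 : 0 ≤ S := tsum_nonneg fun z => mul_nonneg (abs_nonneg _) (hp z)
  have hcinv : 0 < c⁻¹ := inv_pos.2 hc
  -- pointwise summability of the flux series
  have hnormle : ∀ (η : ℤ → ℕ) (z : ℤ),
      ‖(z : ℝ) * p z * b (η 0) (η z)‖ ≤ B * (|(z : ℝ)| * p z) := by
    intro η z
    rw [Real.norm_eq_abs, abs_mul, abs_mul, abs_of_nonneg (hp z),
      abs_of_nonneg (hbnonneg _ _)]
    calc |(z : ℝ)| * p z * b (η 0) (η z) ≤ |(z : ℝ)| * p z * B :=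
          mul_le_mul_of_nonneg_left (hbB _ _) (mul_nonneg (abs_nonneg _) (hp z))
      _ = B * (|(z : ℝ)| * p z) := by ring
  have hsumm : ∀ η : ℤ → ℕ, Summable fun z : ℤ => (z : ℝ) * p z * b (η 0) (η z) := by
    intro η
    exact Summable.of_norm_bounded (hpsum.mul_left B) (hnormle η)
  have htsum_bound : ∀ η : ℤ → ℕ,
      |∑' z : ℤ, (z : ℝ) * p z * b (η 0) (η z)| ≤ B * S := by
    intro η
    have := abs_tsum_le' (f := fun z : ℤ => (z : ℝ) * p z * b (η 0) (η z))
      (g := fun z : ℤ => B * (|(z : ℝ)| * p z)) (hpsum.mul_left B)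
      (fun z => hnormle η z)
    calc |∑' z : ℤ, (z : ℝ) * p z * b (η 0) (η z)|
        ≤ ∑' z : ℤ, B * (|(z : ℝ)| * p z) := this
      _ = B * S := tsum_mul_left
  -- measurability
  have hFmeas : Measurable fun x : (ℤ → ℝ) × (ℤ → ℕ) => microFlux p b x.1 x.2 := by
    unfold microFlux
    have hmul : ∀ z : ℤ, Measurable fun x : (ℤ → ℝ) × (ℤ → ℕ) =>
        (z : ℝ) * p z * b (x.2 0) (x.2 z) := by
      intro z
      have hpair : Measurable fun x : (ℤ → ℝ) × (ℤ → ℕ) => (x.2 0, x.2 z) :=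
        ((measurable_pi_apply 0).comp measurable_snd).prodMk
          ((measurable_pi_apply z).comp measurable_snd)
      exact measurable_const.mul ((measurable_of_countable (fun n : ℕ × ℕ => b n.1 n.2)).comp hpair)
    exact ((measurable_pi_apply 0).comp measurable_fst).mul
      (measurable_tsum_int hmul (fun x => hsumm x.2))
  have hT1 : Measurable fun q : (ℤ → ℝ) × (ℤ → ℕ) × (ℤ → ℕ) => (q.1, q.2.1) :=
    measurable_fst.prodMk (measurable_fst.comp measurable_snd)
  have hT2 : Measurable fun q : (ℤ → ℝ) × (ℤ → ℕ) × (ℤ → ℕ) => (q.1, q.2.2) :=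
    measurable_fst.prodMk (measurable_snd.comp measurable_snd)
  -- rewrite the two integrals over the coupling
  have e1 : ∫ q, microFlux p b q.1 q.2 ∂ν = ∫ q, microFlux p b q.1 q.2.1 ∂νc := by
    rw [← hmarg1, integral_map hT1.aemeasurable hFmeas.aestronglyMeasurable]
  have e2 : ∫ q, microFlux p b q.1 q.2 ∂ν' = ∫ q, microFlux p b q.1 q.2.2 ∂νc := by
    rw [← hmarg2, integral_map hT2.aemeasurable hFmeas.aestronglyMeasurable]
  -- integrability of the two fluxes
  have hmeasF1 : Measurable fun q : (ℤ → ℝ) × (ℤ → ℕ) × (ℤ → ℕ) =>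
      microFlux p b q.1 q.2.1 := hFmeas.comp hT1
  have hmeasF2 : Measurable fun q : (ℤ → ℝ) × (ℤ → ℕ) × (ℤ → ℕ) =>
      microFlux p b q.1 q.2.2 := hFmeas.comp hT2
  have habsα : ∀ᵐ q ∂νc, |q.1 0| ≤ c⁻¹ := by
    filter_upwards [hαbound] with q ha
    rw [abs_of_nonneg (le_of_lt (lt_of_lt_of_le hc (ha 0).1))]
    exact (ha 0).2
  have hbnd : ∀ (η : ℤ → ℕ) (a : ℝ), |a| ≤ c⁻¹ →
      ‖a * ∑' z : ℤ, (z : ℝ) * p z * b (η 0) (η z)‖ ≤ c⁻¹ * (B * S) := by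
    intro η a ha
    rw [Real.norm_eq_abs, abs_mul]
    exact mul_le_mul ha (htsum_bound η) (abs_nonneg _) (le_of_lt hcinv)
  have hintF1 : Integrable (fun q => microFlux p b q.1 q.2.1) νc := by
    refine Integrable.mono' (integrable_const (c⁻¹ * (B * S)))
      hmeasF1.aestronglyMeasurable ?_
    filter_upwards [habsα] with q ha
    exact hbnd q.2.1 (q.1 0) ha
  have hintF2 : Integrable (fun q => microFlux p b q.1 q.2.2) νc := by
    refine Integrable.mono' (integrable_const (c⁻¹ * (B * S)))
      hmeasF2.aestronglyMeasurable ?_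
    filter_upwards [habsα] with q ha
    exact hbnd q.2.2 (q.1 0) ha
  -- the truncated discrepancies
  have hddmeas : ∀ x : ℤ, Measurable (ddf K x) := by
    intro x
    have h1 : Measurable fun q : (ℤ → ℝ) × (ℤ → ℕ) × (ℤ → ℕ) => (q.2.1 x : ℝ) :=
      measurable_from_nat.comp ((measurable_pi_apply x).comp (measurable_fst.comp measurable_snd))
    have h2 : Measurable fun q : (ℤ → ℝ) × (ℤ → ℕ) × (ℤ → ℕ) => (q.2.2 x : ℝ) :=
      measurable_from_nat.comp ((measurable_pi_apply x).comp (measurable_snd.comp measurable_snd))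
    exact ((h1.sub h2).abs).min measurable_const
  have hdd_nonneg : ∀ x q, 0 ≤ ddf K x q := fun x q =>
    le_min (abs_nonneg _) (Nat.cast_nonneg K)
  have hdd_leK : ∀ x q, ddf K x q ≤ (K : ℝ) := fun x q => min_le_right _ _
  have hdd_int : ∀ x : ℤ, Integrable (ddf K x) νc := by
    intro x
    refine Integrable.mono' (integrable_const (K : ℝ))
      (hddmeas x).aestronglyMeasurable (ae_of_all _ fun q => ?_)
    rw [Real.norm_eq_abs, abs_of_nonneg (hdd_nonneg x q)]
    exact hdd_leK x q
  have hdd_eq : ∀ᵐ q ∂νc, ∀ x : ℤ, ddf K x q = (q.2.2 x : ℝ) - q.2.1 x := by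
    filter_upwards [hord, hbound] with q h1 h2
    intro x
    have habs : |(q.2.1 x : ℝ) - q.2.2 x| = (q.2.2 x : ℝ) - q.2.1 x := by
      rw [abs_sub_comm, abs_of_nonneg (sub_nonneg.2 (Nat.cast_le.2 (h1 x)))]
    have hle : (q.2.2 x : ℝ) - q.2.1 x ≤ (K : ℝ) := by
      have := (Nat.cast_le (α := ℝ)).2 (h2 x)
      have h0 : (0 : ℝ) ≤ (q.2.1 x : ℝ) := Nat.cast_nonneg _
      linarith
    unfold ddf
    rw [habs]
    exact min_eq_left hle
  have hdd_integral : ∀ x : ℤ, ∫ q, ddf K x q ∂νc = ρ' - ρ := by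
    intro x
    have heq : (fun q => ddf K x q) =ᵐ[νc] fun q => |(q.2.1 x : ℝ) - q.2.2 x| := by
      filter_upwards [hdd_eq, hord] with q h h1
      rw [h x, abs_sub_comm, abs_of_nonneg (sub_nonneg.2 (Nat.cast_le.2 (h1 x)))]
    rw [integral_congr_ae heq, hcoupl x]
  -- the dominating series
  set C : ℤ → ℝ := fun z => c⁻¹ * B * (|(z : ℝ)| * p z) with hCdef
  have hC_nonneg : ∀ z, 0 ≤ C z := fun z =>
    mul_nonneg (mul_nonneg (le_of_lt hcinv) hB) (mul_nonneg (abs_nonneg _) (hp z))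
  set g : ℤ → ((ℤ → ℝ) × (ℤ → ℕ) × (ℤ → ℕ)) → ℝ :=
    fun z q => C z * (ddf K 0 q + ddf K z q) with hgdef
  have hgmeas : ∀ z, Measurable (g z) := fun z =>
    measurable_const.mul ((hddmeas 0).add (hddmeas z))
  have hg_nonneg : ∀ z q, 0 ≤ g z q := fun z q =>
    mul_nonneg (hC_nonneg z) (add_nonneg (hdd_nonneg 0 q) (hdd_nonneg z q))
  have hg_le : ∀ z q, g z q ≤ (c⁻¹ * B * (2 * K)) * (|(z : ℝ)| * p z) := by
    intro z q
    have h1 : ddf K 0 q + ddf K z q ≤ 2 * K := by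
      have := hdd_leK 0 q; have := hdd_leK z q; linarith
    calc g z q ≤ C z * (2 * K) := mul_le_mul_of_nonneg_left h1 (hC_nonneg z)
      _ = (c⁻¹ * B * (2 * K)) * (|(z : ℝ)| * p z) := by rw [hCdef]; ring
  have hMsum : Summable fun z : ℤ => (c⁻¹ * B * (2 * K)) * (|(z : ℝ)| * p z) :=
    hpsum.mul_left _
  have hg_summ : ∀ q, Summable fun z => g z q := fun q =>
    Summable.of_nonneg_of_le (fun z => hg_nonneg z q) (fun z => hg_le z q) hMsum
  have hGmeas : Measurable fun q => ∑' z, g z q := measurable_tsum_int hgmeas hg_summ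
  have hG_bound : ∀ q, ∑' z, g z q ≤ (c⁻¹ * B * (2 * K)) * S := by
    intro q
    calc ∑' z, g z q ≤ ∑' z : ℤ, (c⁻¹ * B * (2 * K)) * (|(z : ℝ)| * p z) :=
          Summable.tsum_le_tsum (fun z => hg_le z q) (hg_summ q) hMsum
      _ = (c⁻¹ * B * (2 * K)) * S := tsum_mul_left
  have hG_int : Integrable (fun q => ∑' z, g z q) νc := by
    refine Integrable.mono' (integrable_const ((c⁻¹ * B * (2 * K)) * S))
      hGmeas.aestronglyMeasurable (ae_of_all _ fun q => ?_)
    rw [Real.norm_eq_abs, abs_of_nonneg (tsum_nonneg fun z => hg_nonneg z q)]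
    exact hG_bound q
  have hg_int : ∀ z, Integrable (g z) νc := fun z =>
    ((hdd_int 0).add (hdd_int z)).const_mul (C z)
  have hg_integral : ∀ z, ∫ q, g z q ∂νc = C z * (2 * (ρ' - ρ)) := by
    intro z
    rw [hgdef]
    simp only
    rw [integral_const_mul, integral_add (hdd_int 0) (hdd_int z), hdd_integral 0,
      hdd_integral z]
    ring
  -- interchange sum and integral
  have hswap : ∫ q, ∑' z, g z q ∂νc = ∑' z, ∫ q, g z q ∂νc := by
    refine (integral_tsum_of_summable_integral_norm hg_int ?_).symm
    have : (fun z : ℤ => ∫ q, ‖g z q‖ ∂νc) = fun z => C z * (2 * (ρ' - ρ)) := by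
      funext z
      rw [← hg_integral z]
      refine integral_congr_ae (ae_of_all _ fun q => ?_)
      exact Real.norm_of_nonneg (hg_nonneg z q)
    rw [this]
    refine (hpsum.mul_left (c⁻¹ * B * (2 * (ρ' - ρ)))).congr fun z => ?_
    rw [hCdef]; ring
  have hsumval : ∑' z, ∫ q, g z q ∂νc = (c⁻¹ * B * (2 * (ρ' - ρ))) * S := by
    calc ∑' z, ∫ q, g z q ∂νc = ∑' z : ℤ, (c⁻¹ * B * (2 * (ρ' - ρ))) * (|(z : ℝ)| * p z) := by
          refine tsum_congr fun z => ?_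
          rw [hg_integral z, hCdef]; ring
      _ = (c⁻¹ * B * (2 * (ρ' - ρ))) * S := tsum_mul_left
  -- the key pointwise a.e. estimate
  have hkey : ∀ᵐ q ∂νc,
      |microFlux p b q.1 q.2.1 - microFlux p b q.1 q.2.2| ≤ ∑' z, g z q := by
    filter_upwards [habsα, hord, hdd_eq] with q ha hor hdq
    have hsub : microFlux p b q.1 q.2.1 - microFlux p b q.1 q.2.2 =
        q.1 0 * ∑' z : ℤ, ((z : ℝ) * p z * b (q.2.1 0) (q.2.1 z) -
          (z : ℝ) * p z * b (q.2.2 0) (q.2.2 z)) := by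
      rw [Summable.tsum_sub (hsumm q.2.1) (hsumm q.2.2)]
      unfold microFlux; ring
    have hterm : ∀ z : ℤ,
        |(z : ℝ) * p z * b (q.2.1 0) (q.2.1 z) - (z : ℝ) * p z * b (q.2.2 0) (q.2.2 z)|
          ≤ (|(z : ℝ)| * p z) * (B * (ddf K 0 q + ddf K z q)) := by
      intro z
      rw [← mul_sub, abs_mul, abs_mul, abs_of_nonneg (hp z)]
      refine mul_le_mul_of_nonneg_left ?_ (mul_nonneg (abs_nonneg _) (hp z))
      rw [hdq 0, hdq z]
      exact b_lip hbnonneg hbB (hor 0) (hor z)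
    have hmaj : Summable fun z : ℤ => (|(z : ℝ)| * p z) * (B * (ddf K 0 q + ddf K z q)) := by
      refine Summable.of_nonneg_of_le
        (fun z => mul_nonneg (mul_nonneg (abs_nonneg _) (hp z))
          (mul_nonneg hB (add_nonneg (hdd_nonneg 0 q) (hdd_nonneg z q))))
        (fun z => ?_) (hpsum.mul_right (B * (2 * K)))
      refine mul_le_mul_of_nonneg_left ?_ (mul_nonneg (abs_nonneg _) (hp z))
      refine mul_le_mul_of_nonneg_left ?_ hB
      have := hdd_leK 0 q; have := hdd_leK z q; linarith
    calc |microFlux p b q.1 q.2.1 - microFlux p b q.1 q.2.2|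
        = |q.1 0| * |∑' z : ℤ, ((z : ℝ) * p z * b (q.2.1 0) (q.2.1 z) -
            (z : ℝ) * p z * b (q.2.2 0) (q.2.2 z))| := by rw [hsub, abs_mul]
      _ ≤ c⁻¹ * ∑' z : ℤ, (|(z : ℝ)| * p z) * (B * (ddf K 0 q + ddf K z q)) :=
          mul_le_mul ha (abs_tsum_le' hmaj hterm) (abs_nonneg _) (le_of_lt hcinv)
      _ = ∑' z, g z q := by
          rw [← tsum_mul_left]
          refine tsum_congr fun z => ?_
          rw [hgdef, hCdef]; ring
  -- assemble everything
  have habsρ : |ρ - ρ'| = ρ' - ρ := by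
    rw [abs_sub_comm, abs_of_nonneg (sub_nonneg.2 hρ)]
  rw [e1, e2, ← integral_sub hintF1 hintF2, habsρ]
  calc |∫ q, (microFlux p b q.1 q.2.1 - microFlux p b q.1 q.2.2) ∂νc|
      ≤ ∫ q, |microFlux p b q.1 q.2.1 - microFlux p b q.1 q.2.2| ∂νc := by
        simpa [Real.norm_eq_abs] using
          norm_integral_le_integral_norm
            (f := fun q => microFlux p b q.1 q.2.1 - microFlux p b q.1 q.2.2) (μ := νc)
    _ ≤ ∫ q, ∑' z, g z q ∂νc :=
        integral_mono_ae ((hintF1.sub hintF2).abs) hG_int hkey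
    _ = (c⁻¹ * B * (2 * (ρ' - ρ))) * S := by rw [hswap, hsumval]
    _ ≤ (2 * c⁻¹ * B * S) * (ρ' - ρ) := by
        have : (c⁻¹ * B * (2 * (ρ' - ρ))) * S = (2 * c⁻¹ * B * S) * (ρ' - ρ) := by ring
        linarith [this.le]
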